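/- Let Ω ⊆ ℝ² be open with (0,0) ∈ Ω and let f : ℝ² → ℝ be of class C³ on Ω. Define p₁(x,y) = a₀₀ + a₁₀x + a₀₁(y − (√3/6)h), where a₀₀, a₁₀, a₀₁ are the constant and linear coefficients of the quadratic interpolant built from the data f_Q = f(Q) for Q ∈ {A,B,C,D,E,F}. Then there exist constants C > 0 and h₀ > 0 such that for every 0 < h ≤ h₀ and all (x,y) in S_R, |f(x,y) − p₁(x,y)| ≤ C·h². -/

import Mathlib

set_option linter.unusedVariables false

/-- √3 -/
noncomputable def s3 : ℝ := Real.sqrt 3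

/-- Vertices of the equilateral triangle of side `2h` and the midpoints of its sides. -/
noncomputable def ptA (h : ℝ) : ℝ × ℝ := (-h, s3 / 2 * h)
noncomputable def ptB (h : ℝ) : ℝ × ℝ := (-h / 2, 0)
noncomputable def ptC (h : ℝ) : ℝ × ℝ := (0, -(s3 / 2 * h))
noncomputable def ptD (h : ℝ) : ℝ × ℝ := (h / 2, 0)
noncomputable def ptE (h : ℝ) : ℝ × ℝ := (h, s3 / 2 * h)
noncomputable def ptF (h : ℝ) : ℝ × ℝ := (0, s3 / 2 * h)

/-- Coefficients of the quadratic interpolant. -/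
noncomputable def a00 (h fA fB fC fD fE fF : ℝ) : ℝ := 4 / 9 * (fB + fD + fF) - 1 / 9 * (fA + fC + fE)
noncomputable def a10 (h fA fB fC fD fE fF : ℝ) : ℝ := (-fA - 4 * fB + 4 * fD + fE) / (6 * h)
noncomputable def a01 (h fA fB fC fD fE fF : ℝ) : ℝ := s3 / (18 * h) * (fA - 4 * fB - 2 * fC - 4 * fD + fE + 8 * fF)
noncomputable def a20 (h fA fB fC fD fE fF : ℝ) : ℝ := (fA - 2 * fF + fE) / (2 * h ^ 2)
noncomputable def a11 (h fA fB fC fD fE fF : ℝ) : ℝ := -(s3 / (3 * h ^ 2)) * (fA - 2 * fB + 2 * fD - fE)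
noncomputable def a02 (h fA fB fC fD fE fF : ℝ) : ℝ := (fA - 4 * fB + 4 * fC - 4 * fD + fE + 2 * fF) / (6 * h ^ 2)

/-- The quadratic interpolant `p(x,y)`. -/
noncomputable def interp (h fA fB fC fD fE fF x y : ℝ) : ℝ :=
  a00 h fA fB fC fD fE fF + a10 h fA fB fC fD fE fF * x
    + a01 h fA fB fC fD fE fF * (y - s3 / 6 * h)
    + a20 h fA fB fC fD fE fF * x ^ 2
    + a11 h fA fB fC fD fE fF * x * (y - s3 / 6 * h)
    + a02 h fA fB fC fD fE fF * (y - s3 / 6 * h) ^ 2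

/-- The closed equilateral triangle `S` with vertices `A, C, E`. -/
noncomputable def triS (h : ℝ) : Set (ℝ × ℝ) := convexHull ℝ {ptA h, ptC h, ptE h}
/-- The closed triangle `S_R` with vertices `B, D, F`. -/
noncomputable def triSR (h : ℝ) : Set (ℝ × ℝ) := convexHull ℝ {ptB h, ptD h, ptF h}

/- ---------- Auxiliary lemmas ---------- -/

lemma combo_eq (h x y c0 c1 c2 eA eB eC eD eE eF s : ℝ) (hh : h ≠ 0) (hs : s ^ 2 = 3) :
    (4 / 9 * ((c0 + c1 * (-h / 2) + c2 * 0 + eB) + (c0 + c1 * (h / 2) + c2 * 0 + eD)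
          + (c0 + c1 * 0 + c2 * (s / 2 * h) + eF))
        - 1 / 9 * ((c0 + c1 * (-h) + c2 * (s / 2 * h) + eA)
          + (c0 + c1 * 0 + c2 * (-(s / 2 * h)) + eC) + (c0 + c1 * h + c2 * (s / 2 * h) + eE)))
      + (-(c0 + c1 * (-h) + c2 * (s / 2 * h) + eA) - 4 * (c0 + c1 * (-h / 2) + c2 * 0 + eB)
          + 4 * (c0 + c1 * (h / 2) + c2 * 0 + eD) + (c0 + c1 * h + c2 * (s / 2 * h) + eE)) / (6 * h) * x
      + s / (18 * h) * ((c0 + c1 * (-h) + c2 * (s / 2 * h) + eA) - 4 * (c0 + c1 * (-h / 2) + c2 * 0 + eB)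
          - 2 * (c0 + c1 * 0 + c2 * (-(s / 2 * h)) + eC) - 4 * (c0 + c1 * (h / 2) + c2 * 0 + eD)
          + (c0 + c1 * h + c2 * (s / 2 * h) + eE) + 8 * (c0 + c1 * 0 + c2 * (s / 2 * h) + eF))
        * (y - s / 6 * h)
    = c0 + c1 * x + c2 * y
      + ((4 / 9 * (eB + eD + eF) - 1 / 9 * (eA + eC + eE))
        + (-eA - 4 * eB + 4 * eD + eE) / (6 * h) * x
        + s / (18 * h) * (eA - 4 * eB - 2 * eC - 4 * eD + eE + 8 * eF) * (y - s / 6 * h)) := by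
  field_simp
  linear_combination (648 * h * c2 * y - 108 * h ^ 2 * c2 * s) * hs

lemma combo_bound (M h x y s e1 e2 e3 e4 e5 e6 : ℝ) (hh : 0 < h) (hM : 0 < M)
    (hx : |x| ≤ h) (hy : |y| ≤ h) (hs0 : 0 ≤ s) (hs2 : s ≤ 2)
    (h1 : |e1| ≤ M * h ^ 2) (h2 : |e2| ≤ M * h ^ 2) (h3 : |e3| ≤ M * h ^ 2)
    (h4 : |e4| ≤ M * h ^ 2) (h5 : |e5| ≤ M * h ^ 2) (h6 : |e6| ≤ M * h ^ 2) :
    |(4 / 9 * (e2 + e4 + e6) - 1 / 9 * (e1 + e3 + e5))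
      + (-e1 - 4 * e2 + 4 * e4 + e5) / (6 * h) * x
      + s / (18 * h) * (e1 - 4 * e2 - 2 * e3 - 4 * e4 + e5 + 8 * e6) * (y - s / 6 * h)|
    ≤ 7 * (M * h ^ 2) := by
  set E := M * h ^ 2 with hE
  have hE0 : 0 < E := by positivity
  obtain ⟨h1a, h1b⟩ := abs_le.mp h1
  obtain ⟨h2a, h2b⟩ := abs_le.mp h2
  obtain ⟨h3a, h3b⟩ := abs_le.mp h3
  obtain ⟨h4a, h4b⟩ := abs_le.mp h4
  obtain ⟨h5a, h5b⟩ := abs_le.mp h5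
  obtain ⟨h6a, h6b⟩ := abs_le.mp h6
  have hb1 : |4 / 9 * (e2 + e4 + e6) - 1 / 9 * (e1 + e3 + e5)| ≤ 5 / 3 * E := by
    rw [abs_le]; constructor <;> linarith
  have hb2 : |(-e1 - 4 * e2 + 4 * e4 + e5) / (6 * h) * x| ≤ 5 / 3 * E := by
    rw [abs_mul, abs_div, abs_of_pos (by positivity : (0:ℝ) < 6 * h)]
    have hnum : |-e1 - 4 * e2 + 4 * e4 + e5| ≤ 10 * E := by
      rw [abs_le]; constructor <;> linarith
    calc |-e1 - 4 * e2 + 4 * e4 + e5| / (6 * h) * |x|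
        ≤ 10 * E / (6 * h) * h := by gcongr
      _ = 5 / 3 * E := by field_simp; ring
  have hb3 : |s / (18 * h) * (e1 - 4 * e2 - 2 * e3 - 4 * e4 + e5 + 8 * e6) * (y - s / 6 * h)|
      ≤ 80 / 27 * E := by
    rw [abs_mul, abs_mul, abs_div, abs_of_pos (by positivity : (0:ℝ) < 18 * h),
      abs_of_nonneg hs0]
    have hnum : |e1 - 4 * e2 - 2 * e3 - 4 * e4 + e5 + 8 * e6| ≤ 20 * E := by
      rw [abs_le]; constructor <;> linarith
    have hy' : |y - s / 6 * h| ≤ 4 / 3 * h := by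
      calc |y - s / 6 * h| ≤ |y| + |s / 6 * h| := abs_sub _ _
        _ ≤ h + s / 6 * h := by
            have : |s / 6 * h| = s / 6 * h := abs_of_nonneg (by positivity)
            rw [this]; linarith
        _ ≤ 4 / 3 * h := by nlinarith
    calc s / (18 * h) * |e1 - 4 * e2 - 2 * e3 - 4 * e4 + e5 + 8 * e6| * |y - s / 6 * h|
        ≤ 2 / (18 * h) * (20 * E) * (4 / 3 * h) := by gcongr
      _ = 80 / 27 * E := by field_simp; ring
  calc |(4 / 9 * (e2 + e4 + e6) - 1 / 9 * (e1 + e3 + e5))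
      + (-e1 - 4 * e2 + 4 * e4 + e5) / (6 * h) * x
      + s / (18 * h) * (e1 - 4 * e2 - 2 * e3 - 4 * e4 + e5 + 8 * e6) * (y - s / 6 * h)|
      ≤ |(4 / 9 * (e2 + e4 + e6) - 1 / 9 * (e1 + e3 + e5))
          + (-e1 - 4 * e2 + 4 * e4 + e5) / (6 * h) * x|
        + |s / (18 * h) * (e1 - 4 * e2 - 2 * e3 - 4 * e4 + e5 + 8 * e6) * (y - s / 6 * h)| :=
        abs_add_le _ _
    _ ≤ (|4 / 9 * (e2 + e4 + e6) - 1 / 9 * (e1 + e3 + e5)|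
          + |(-e1 - 4 * e2 + 4 * e4 + e5) / (6 * h) * x|)
        + |s / (18 * h) * (e1 - 4 * e2 - 2 * e3 - 4 * e4 + e5 + 8 * e6) * (y - s / 6 * h)| := by
        gcongr; exact abs_add_le _ _
    _ ≤ 7 * E := by linarith

/-- Second–order Taylor-type bound for a `C³` function near the origin. -/
lemma quad_bound (Ω : Set (ℝ × ℝ)) (hΩ : IsOpen Ω) (hmem : (0, 0) ∈ Ω)
    (f : ℝ × ℝ → ℝ) (hf : ContDiffOn ℝ 3 f Ω) :
    ∃ M > 0, ∃ r > 0, ∀ w : ℝ × ℝ, ‖w‖ ≤ r →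
      |f w - f (0, 0) - fderiv ℝ f (0, 0) w| ≤ M * ‖w‖ ^ 2 := by
  have h00 : ((0, 0) : ℝ × ℝ) = 0 := rfl
  have hC3 : ContDiffAt ℝ 3 f (0, 0) := hf.contDiffAt (hΩ.mem_nhds hmem)
  have hC1 : ContDiffAt ℝ 1 (fderiv ℝ f) (0, 0) := hC3.fderiv_right (by norm_num)
  obtain ⟨K, t, ht, hK⟩ := hC1.exists_lipschitzOnWith
  obtain ⟨ε, hε, hball⟩ := Metric.mem_nhds_iff.mp (Filter.inter_mem ht (hΩ.mem_nhds hmem))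
  refine ⟨(K : ℝ) + 1, by positivity, ε / 2, by positivity, ?_⟩
  intro w hw
  set L := fderiv ℝ f (0, 0) with hLdef
  set s : Set (ℝ × ℝ) := Metric.closedBall 0 ‖w‖ with hsdef
  have hsub : s ⊆ t ∩ Ω := by
    intro u hu
    apply hball
    rw [Metric.mem_ball, h00, dist_zero_right]
    rw [hsdef, Metric.mem_closedBall, dist_zero_right] at hu
    linarith
  have hder : ∀ u ∈ s, HasFDerivWithinAt (fun v => f v - L v) (fderiv ℝ f u - L) s u := by
    intro u hu
    have hu' : u ∈ Ω := (hsub hu).2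
    have hdf : DifferentiableAt ℝ f u :=
      (hf.contDiffAt (hΩ.mem_nhds hu')).differentiableAt (by norm_num)
    exact (hdf.hasFDerivAt.sub L.hasFDerivAt).hasFDerivWithinAt
  have hbound : ∀ u ∈ s, ‖fderiv ℝ f u - L‖ ≤ ((K : ℝ) + 1) * ‖w‖ := by
    intro u hu
    have hut : u ∈ t := (hsub hu).1
    have h0t : ((0, 0) : ℝ × ℝ) ∈ t := mem_of_mem_nhds ht
    have := hK.dist_le_mul u hut (0, 0) h0t
    rw [dist_eq_norm, h00, dist_zero_right] at this
    rw [hsdef, Metric.mem_closedBall, dist_zero_right] at hu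
    calc ‖fderiv ℝ f u - L‖ ≤ K * ‖u‖ := by rw [hLdef, h00]; exact this
      _ ≤ ((K : ℝ) + 1) * ‖w‖ := by
          have hK0 : (0 : ℝ) ≤ K := K.coe_nonneg
          nlinarith [norm_nonneg u, norm_nonneg w]
  have h0s : (0 : ℝ × ℝ) ∈ s := by
    rw [hsdef, Metric.mem_closedBall, dist_zero_right]; simp [norm_nonneg]
  have hws : w ∈ s := by
    rw [hsdef, Metric.mem_closedBall, dist_zero_right]
  have key := Convex.norm_image_sub_le_of_norm_hasFDerivWithin_le hder hbound
    (convex_closedBall _ _) h0s hws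
  have hL0 : L (0 : ℝ × ℝ) = 0 := L.map_zero
  rw [sub_zero] at key
  have : f w - L w - (f 0 - L 0) = f w - f (0, 0) - L w := by
    rw [hL0, h00]; ring
  rw [this] at key
  calc |f w - f (0, 0) - L w| = ‖f w - f (0, 0) - L w‖ := (Real.norm_eq_abs _).symm
    _ ≤ ((K : ℝ) + 1) * ‖w‖ * ‖w‖ := key
    _ = ((K : ℝ) + 1) * ‖w‖ ^ 2 := by ring

lemma pt_norm_le {a b h : ℝ} (ha : |a| ≤ h) (hb : |b| ≤ h) : ‖((a, b) : ℝ × ℝ)‖ ≤ h := by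
  rw [Prod.norm_def]
  exact max_le (by rwa [Real.norm_eq_abs]) (by rwa [Real.norm_eq_abs])

/-- The linear part `p₁` of the quadratic interpolant approximates a `C³` function to
second order on `S_R`. -/
theorem linear_part_second_order (Ω : Set (ℝ × ℝ)) (hΩ : IsOpen Ω) (hmem : (0, 0) ∈ Ω)
    (f : ℝ × ℝ → ℝ) (hf : ContDiffOn ℝ 3 f Ω) :
    ∃ C > 0, ∃ h₀ > 0, ∀ h : ℝ, 0 < h → h ≤ h₀ →
      ∀ z ∈ triSR h,
        |f z - (a00 h (f (ptA h)) (f (ptB h)) (f (ptC h)) (f (ptD h)) (f (ptE h)) (f (ptF h)) +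
            a10 h (f (ptA h)) (f (ptB h)) (f (ptC h)) (f (ptD h)) (f (ptE h)) (f (ptF h)) * z.1 +
            a01 h (f (ptA h)) (f (ptB h)) (f (ptC h)) (f (ptD h)) (f (ptE h)) (f (ptF h)) *
              (z.2 - s3 / 6 * h))| ≤ C * h ^ 2 := by
  obtain ⟨M, hM, r, hr, hquad⟩ := quad_bound Ω hΩ hmem f hf
  refine ⟨8 * M, by positivity, r, hr, ?_⟩
  intro h hh hhr z hz
  -- basic facts about s3
  have hs3 : s3 ^ 2 = 3 := Real.sq_sqrt (by norm_num)
  have hs30 : 0 ≤ s3 := Real.sqrt_nonneg 3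
  have hs32 : s3 ≤ 2 := by nlinarith
  -- the linear functional
  set L := fderiv ℝ f (0, 0) with hLdef
  set c0 := f (0, 0) with hc0
  set c1 := L (1, 0) with hc1
  set c2 := L (0, 1) with hc2
  have hL : ∀ w : ℝ × ℝ, L w = w.1 * c1 + w.2 * c2 := by
    intro w
    have hw : w = w.1 • ((1 : ℝ), (0 : ℝ)) + w.2 • ((0 : ℝ), (1 : ℝ)) := by
      ext <;> simp
    calc L w = L (w.1 • ((1 : ℝ), (0 : ℝ)) + w.2 • ((0 : ℝ), (1 : ℝ))) := by rw [← hw]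
      _ = w.1 * c1 + w.2 * c2 := by
          rw [map_add, map_smul, map_smul, smul_eq_mul, smul_eq_mul]
  -- norms of the six points
  have hs3h : |s3 / 2 * h| ≤ h := by
    rw [abs_of_nonneg (by positivity)]; nlinarith
  have hh2 : |h / 2| ≤ h := by rw [abs_of_nonneg (by positivity)]; linarith
  have hnh : |-h| ≤ h := by rw [abs_neg, abs_of_pos hh]
  have hhh : |h| ≤ h := le_of_eq (abs_of_pos hh)
  have h0h : |(0 : ℝ)| ≤ h := by simp; positivity
  have hnh2 : |-h / 2| ≤ h := by rw [neg_div, abs_neg]; exact hh2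
  have hns3h : |-(s3 / 2 * h)| ≤ h := by rw [abs_neg]; exact hs3h
  have hnA : ‖ptA h‖ ≤ h := pt_norm_le hnh hs3h
  have hnB : ‖ptB h‖ ≤ h := pt_norm_le hnh2 h0h
  have hnC : ‖ptC h‖ ≤ h := pt_norm_le h0h hns3h
  have hnD : ‖ptD h‖ ≤ h := pt_norm_le hh2 h0h
  have hnE : ‖ptE h‖ ≤ h := pt_norm_le hhh hs3h
  have hnF : ‖ptF h‖ ≤ h := pt_norm_le h0h hs3h
  -- z is in the closed ball of radius h
  have hzn : ‖z‖ ≤ h := by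
    have hsub : triSR h ⊆ Metric.closedBall 0 h := by
      apply convexHull_min _ (convex_closedBall _ _)
      intro p hp
      rcases hp with hp | hp | hp <;>
        · subst hp
          rw [Metric.mem_closedBall, dist_zero_right]
          first
            | exact hnB
            | exact hnD
            | exact hnF
    have := hsub hz
    rwa [Metric.mem_closedBall, dist_zero_right] at this
  have hz1 : |z.1| ≤ h := by
    rw [← Real.norm_eq_abs]; exact le_trans (norm_fst_le z) hzn
  have hz2 : |z.2| ≤ h := by
    rw [← Real.norm_eq_abs]; exact le_trans (norm_snd_le z) hzn
  -- Taylor errors at each point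
  have mk_err : ∀ w : ℝ × ℝ, ‖w‖ ≤ h → |f w - (c0 + c1 * w.1 + c2 * w.2)| ≤ M * h ^ 2 := by
    intro w hw
    have h1 : |f w - c0 - L w| ≤ M * ‖w‖ ^ 2 := hquad w (le_trans hw hhr)
    rw [hL w] at h1
    have e : f w - (c0 + c1 * w.1 + c2 * w.2) = f w - c0 - (w.1 * c1 + w.2 * c2) := by ring
    rw [e]
    calc |f w - c0 - (w.1 * c1 + w.2 * c2)| ≤ M * ‖w‖ ^ 2 := h1
      _ ≤ M * h ^ 2 := by
          apply mul_le_mul_of_nonneg_left _ hM.le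
          exact pow_le_pow_left₀ (norm_nonneg _) hw 2
  obtain ⟨eA, hAd, hAb⟩ : ∃ e, f (ptA h) = c0 + c1 * (-h) + c2 * (s3 / 2 * h) + e ∧ |e| ≤ M * h ^ 2 := by
    refine ⟨f (ptA h) - (c0 + c1 * (-h) + c2 * (s3 / 2 * h)), by ring, ?_⟩
    have h1 := mk_err (ptA h) hnA
    have e : f (ptA h) - (c0 + c1 * (-h) + c2 * (s3 / 2 * h))
        = f (ptA h) - (c0 + c1 * (ptA h).1 + c2 * (ptA h).2) := by
      rw [show (ptA h).1 = -h from rfl, show (ptA h).2 = s3 / 2 * h from rfl]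
    rw [e]; exact h1
  obtain ⟨eB, hBd, hBb⟩ : ∃ e, f (ptB h) = c0 + c1 * (-h / 2) + c2 * 0 + e ∧ |e| ≤ M * h ^ 2 := by
    refine ⟨f (ptB h) - (c0 + c1 * (-h / 2) + c2 * 0), by ring, ?_⟩
    have h1 := mk_err (ptB h) hnB
    have e : f (ptB h) - (c0 + c1 * (-h / 2) + c2 * 0)
        = f (ptB h) - (c0 + c1 * (ptB h).1 + c2 * (ptB h).2) := by
      rw [show (ptB h).1 = -h / 2 from rfl, show (ptB h).2 = 0 from rfl]
    rw [e]; exact h1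
  obtain ⟨eC, hCd, hCb⟩ : ∃ e, f (ptC h) = c0 + c1 * 0 + c2 * (-(s3 / 2 * h)) + e ∧ |e| ≤ M * h ^ 2 := by
    refine ⟨f (ptC h) - (c0 + c1 * 0 + c2 * (-(s3 / 2 * h))), by ring, ?_⟩
    have h1 := mk_err (ptC h) hnC
    have e : f (ptC h) - (c0 + c1 * 0 + c2 * (-(s3 / 2 * h)))
        = f (ptC h) - (c0 + c1 * (ptC h).1 + c2 * (ptC h).2) := by
      rw [show (ptC h).1 = 0 from rfl, show (ptC h).2 = -(s3 / 2 * h) from rfl]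
    rw [e]; exact h1
  obtain ⟨eD, hDd, hDb⟩ : ∃ e, f (ptD h) = c0 + c1 * (h / 2) + c2 * 0 + e ∧ |e| ≤ M * h ^ 2 := by
    refine ⟨f (ptD h) - (c0 + c1 * (h / 2) + c2 * 0), by ring, ?_⟩
    have h1 := mk_err (ptD h) hnD
    have e : f (ptD h) - (c0 + c1 * (h / 2) + c2 * 0)
        = f (ptD h) - (c0 + c1 * (ptD h).1 + c2 * (ptD h).2) := by
      rw [show (ptD h).1 = h / 2 from rfl, show (ptD h).2 = 0 from rfl]
    rw [e]; exact h1
  obtain ⟨eE, hEd, hEb⟩ : ∃ e, f (ptE h) = c0 + c1 * h + c2 * (s3 / 2 * h) + e ∧ |e| ≤ M * h ^ 2 := by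
    refine ⟨f (ptE h) - (c0 + c1 * h + c2 * (s3 / 2 * h)), by ring, ?_⟩
    have h1 := mk_err (ptE h) hnE
    have e : f (ptE h) - (c0 + c1 * h + c2 * (s3 / 2 * h))
        = f (ptE h) - (c0 + c1 * (ptE h).1 + c2 * (ptE h).2) := by
      rw [show (ptE h).1 = h from rfl, show (ptE h).2 = s3 / 2 * h from rfl]
    rw [e]; exact h1
  obtain ⟨eF, hFd, hFb⟩ : ∃ e, f (ptF h) = c0 + c1 * 0 + c2 * (s3 / 2 * h) + e ∧ |e| ≤ M * h ^ 2 := by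
    refine ⟨f (ptF h) - (c0 + c1 * 0 + c2 * (s3 / 2 * h)), by ring, ?_⟩
    have h1 := mk_err (ptF h) hnF
    have e : f (ptF h) - (c0 + c1 * 0 + c2 * (s3 / 2 * h))
        = f (ptF h) - (c0 + c1 * (ptF h).1 + c2 * (ptF h).2) := by
      rw [show (ptF h).1 = 0 from rfl, show (ptF h).2 = s3 / 2 * h from rfl]
    rw [e]; exact h1
  -- rewrite the interpolant using the exact identity
  rw [hAd, hBd, hCd, hDd, hEd, hFd]
  simp only [a00, a10, a01]
  rw [combo_eq h z.1 z.2 c0 c1 c2 eA eB eC eD eE eF s3 hh.ne' hs3]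
  -- final estimate
  have hfz : |f z - (c0 + c1 * z.1 + c2 * z.2)| ≤ M * h ^ 2 := mk_err z hzn
  have hEc := combo_bound M h z.1 z.2 s3 eA eB eC eD eE eF hh hM hz1 hz2 hs30 hs32
    hAb hBb hCb hDb hEb hFb
  have habs : |f z - (c0 + c1 * z.1 + c2 * z.2
      + ((4 / 9 * (eB + eD + eF) - 1 / 9 * (eA + eC + eE))
        + (-eA - 4 * eB + 4 * eD + eE) / (6 * h) * z.1
        + s3 / (18 * h) * (eA - 4 * eB - 2 * eC - 4 * eD + eE + 8 * eF) * (z.2 - s3 / 6 * h)))|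
      = |(f z - (c0 + c1 * z.1 + c2 * z.2))
        - ((4 / 9 * (eB + eD + eF) - 1 / 9 * (eA + eC + eE))
          + (-eA - 4 * eB + 4 * eD + eE) / (6 * h) * z.1
          + s3 / (18 * h) * (eA - 4 * eB - 2 * eC - 4 * eD + eE + 8 * eF) * (z.2 - s3 / 6 * h))| := by
    congr 1; ring
  rw [habs]
  calc |(f z - (c0 + c1 * z.1 + c2 * z.2))
        - ((4 / 9 * (eB + eD + eF) - 1 / 9 * (eA + eC + eE))
          + (-eA - 4 * eB + 4 * eD + eE) / (6 * h) * z.1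
          + s3 / (18 * h) * (eA - 4 * eB - 2 * eC - 4 * eD + eE + 8 * eF) * (z.2 - s3 / 6 * h))|
      ≤ |f z - (c0 + c1 * z.1 + c2 * z.2)|
        + |(4 / 9 * (eB + eD + eF) - 1 / 9 * (eA + eC + eE))
          + (-eA - 4 * eB + 4 * eD + eE) / (6 * h) * z.1
          + s3 / (18 * h) * (eA - 4 * eB - 2 * eC - 4 * eD + eE + 8 * eF) * (z.2 - s3 / 6 * h)| :=
      abs_sub _ _
    _ ≤ M * h ^ 2 + 7 * (M * h ^ 2) := add_le_add hfz hEc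
    _ = 8 * M * h ^ 2 := by ring
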